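/- The ℤ-submodule O of B spanned by 1, (1+j)/2, (i+k)/2, (a·j+k)/q contains 1 and is closed under multiplication; that is, there is a subring of B whose underlying set is O (so O is a ℤ-order in B). -/

import Mathlib

open Quaternion

set_option maxHeartbeats 1600000 in
/-- With `p`, `q` odd primes, `q ≡ 3 (mod 8)`, `(-q/p) = -1`, and `a` an integer
with `a² ≡ -p (mod q)`, the `ℤ`-submodule `O` of `B = ℍ[ℚ, -p, -q]` spanned by
`1, (1+j)/2, (i+k)/2, (a·j+k)/q` contains `1` and is closed under multiplication; that is,
there is a subring of `B` whose underlying set is `O` (so `O` is a `ℤ`-order in `B`). -/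
theorem quaternionAlgebra_order (p q : ℕ) [Fact p.Prime] (hq : q.Prime)
    (hpodd : Odd p) (hqodd : Odd q) (hq8 : q % 8 = 3)
    (hleg : legendreSym p (-(q : ℤ)) = -1)
    (a : ℤ) (ha : a ^ 2 ≡ -(p : ℤ) [ZMOD (q : ℤ)]) :
    let i : ℍ[ℚ, -(p : ℚ), -(q : ℚ)] := ⟨0, 1, 0, 0⟩
    let j : ℍ[ℚ, -(p : ℚ), -(q : ℚ)] := ⟨0, 0, 1, 0⟩
    let k : ℍ[ℚ, -(p : ℚ), -(q : ℚ)] := ⟨0, 0, 0, 1⟩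
    let O : Submodule ℤ ℍ[ℚ, -(p : ℚ), -(q : ℚ)] :=
      Submodule.span ℤ {1, ((2 : ℚ)⁻¹) • (1 + j), ((2 : ℚ)⁻¹) • (i + k),
        ((q : ℚ)⁻¹) • ((a : ℚ) • j + k)}
    (1 : ℍ[ℚ, -(p : ℚ), -(q : ℚ)]) ∈ O ∧
      (∀ x ∈ O, ∀ y ∈ O, x * y ∈ O) ∧
      ∃ S : Subring ℍ[ℚ, -(p : ℚ), -(q : ℚ)], (S : Set ℍ[ℚ, -(p : ℚ), -(q : ℚ)]) = (O : Set ℍ[ℚ, -(p : ℚ), -(q : ℚ)]) := by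
  intro i j k O
  have hi : i = (⟨0, 1, 0, 0⟩ : ℍ[ℚ, -(p : ℚ), -(q : ℚ)]) := rfl
  have hj : j = (⟨0, 0, 1, 0⟩ : ℍ[ℚ, -(p : ℚ), -(q : ℚ)]) := rfl
  have hk : k = (⟨0, 0, 0, 1⟩ : ℍ[ℚ, -(p : ℚ), -(q : ℚ)]) := rfl
  set g2 : ℍ[ℚ, -(p : ℚ), -(q : ℚ)] := ((2 : ℚ)⁻¹) • (1 + j) with hg2
  set g3 : ℍ[ℚ, -(p : ℚ), -(q : ℚ)] := ((2 : ℚ)⁻¹) • (i + k) with hg3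
  set g4 : ℍ[ℚ, -(p : ℚ), -(q : ℚ)] := ((q : ℚ)⁻¹) • ((a : ℚ) • j + k) with hg4
  have hO : O = Submodule.span ℤ ({1, g2, g3, g4} :
      Set ℍ[ℚ, -(p : ℚ), -(q : ℚ)]) := rfl
  have hq4 : q % 4 = 3 := by omega
  obtain ⟨n, hn⟩ : ∃ n : ℤ, (q : ℤ) = 4 * n - 1 := ⟨((q : ℤ) + 1) / 4, by omega⟩
  obtain ⟨t, ht⟩ : ∃ t : ℤ, a ^ 2 + (p : ℤ) = q * t := by
    obtain ⟨c, hc⟩ := Int.ModEq.dvd ha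
    exact ⟨-c, by linarith⟩
  have hq0 : (q : ℚ) ≠ 0 := Nat.cast_ne_zero.2 hq.pos.ne'
  have hnQ : (q : ℚ) = 4 * (n : ℚ) - 1 := by exact_mod_cast hn
  have htQ : (a : ℚ) ^ 2 + (p : ℚ) = (q : ℚ) * (t : ℚ) := by exact_mod_cast ht
  have hn' : (n : ℚ) = ((q : ℚ) + 1) / 4 := by rw [hnQ]; ring
  have ht' : (t : ℚ) = ((a : ℚ) ^ 2 + (p : ℚ)) / (q : ℚ) := by
    rw [htQ]; exact (mul_div_cancel_left₀ _ hq0).symm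
  -- membership of integer combinations
  have hmem : ∀ c1 c2 c3 c4 : ℤ,
      c1 • (1 : ℍ[ℚ, -(p : ℚ), -(q : ℚ)]) + c2 • g2 + c3 • g3 + c4 • g4 ∈ O := by
    intro c1 c2 c3 c4
    rw [hO]
    refine Submodule.add_mem _ (Submodule.add_mem _ (Submodule.add_mem _ ?_ ?_) ?_) ?_ <;>
      exact Submodule.smul_mem _ _ (Submodule.subset_span (by simp))
  have hgen : ∀ x ∈ ({1, g2, g3, g4} : Set ℍ[ℚ, -(p : ℚ), -(q : ℚ)]), x ∈ O := fun x hx =>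
    hO ▸ Submodule.subset_span hx
  -- the nine nontrivial products
  have h22 : g2 * g2 = (-n) • (1 : ℍ[ℚ, -(p : ℚ), -(q : ℚ)]) + (1 : ℤ) • g2
      + (0 : ℤ) • g3 + (0 : ℤ) • g4 := by
    ext <;>
      simp only [← Int.cast_smul_eq_zsmul ℚ, hg2, hg3, hg4, hi, hj, hk] <;>
      simp [QuaternionAlgebra.re_mul, QuaternionAlgebra.imI_mul,
        QuaternionAlgebra.imJ_mul, QuaternionAlgebra.imK_mul, smul_eq_mul,
        Int.cast_mul, Int.cast_sub, Int.cast_neg, Int.cast_add, Int.cast_one, Int.cast_pow,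
        Int.cast_natCast, Int.cast_ofNat, hn', ht'] <;>
      field_simp <;> ring
  have h23 : g2 * g3 = (-(a * n)) • (1 : ℍ[ℚ, -(p : ℚ), -(q : ℚ)]) + (2 * a * n) • g2
      + (2 * n) • g3 + (-((q : ℤ) * n)) • g4 := by
    ext <;>
      simp only [← Int.cast_smul_eq_zsmul ℚ, hg2, hg3, hg4, hi, hj, hk] <;>
      simp [QuaternionAlgebra.re_mul, QuaternionAlgebra.imI_mul,
        QuaternionAlgebra.imJ_mul, QuaternionAlgebra.imK_mul, smul_eq_mul,
        Int.cast_mul, Int.cast_sub, Int.cast_neg, Int.cast_add, Int.cast_one, Int.cast_pow,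
        Int.cast_natCast, Int.cast_ofNat, hn', ht'] <;>
      field_simp <;> ring
  have h32 : g3 * g2 = (a * n) • (1 : ℍ[ℚ, -(p : ℚ), -(q : ℚ)]) + (-(2 * a * n)) • g2
      + (1 - 2 * n) • g3 + ((q : ℤ) * n) • g4 := by
    ext <;>
      simp only [← Int.cast_smul_eq_zsmul ℚ, hg2, hg3, hg4, hi, hj, hk] <;>
      simp [QuaternionAlgebra.re_mul, QuaternionAlgebra.imI_mul,
        QuaternionAlgebra.imJ_mul, QuaternionAlgebra.imK_mul, smul_eq_mul,
        Int.cast_mul, Int.cast_sub, Int.cast_neg, Int.cast_add, Int.cast_one, Int.cast_pow,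
        Int.cast_natCast, Int.cast_ofNat, hn', ht'] <;>
      field_simp <;> ring
  have h24 : g2 * g4 = (-a) • (1 : ℍ[ℚ, -(p : ℚ), -(q : ℚ)]) + a • g2
      + (1 : ℤ) • g3 + (1 - 2 * n) • g4 := by
    ext <;>
      simp only [← Int.cast_smul_eq_zsmul ℚ, hg2, hg3, hg4, hi, hj, hk] <;>
      simp [QuaternionAlgebra.re_mul, QuaternionAlgebra.imI_mul,
        QuaternionAlgebra.imJ_mul, QuaternionAlgebra.imK_mul, smul_eq_mul,
        Int.cast_mul, Int.cast_sub, Int.cast_neg, Int.cast_add, Int.cast_one, Int.cast_pow,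
        Int.cast_natCast, Int.cast_ofNat, hn', ht'] <;>
      field_simp <;> ring
  have h42 : g4 * g2 = (0 : ℤ) • (1 : ℍ[ℚ, -(p : ℚ), -(q : ℚ)]) + (-a) • g2
      + (-1 : ℤ) • g3 + (2 * n) • g4 := by
    ext <;>
      simp only [← Int.cast_smul_eq_zsmul ℚ, hg2, hg3, hg4, hi, hj, hk] <;>
      simp [QuaternionAlgebra.re_mul, QuaternionAlgebra.imI_mul,
        QuaternionAlgebra.imJ_mul, QuaternionAlgebra.imK_mul, smul_eq_mul,
        Int.cast_mul, Int.cast_sub, Int.cast_neg, Int.cast_add, Int.cast_one, Int.cast_pow,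
        Int.cast_natCast, Int.cast_ofNat, hn', ht'] <;>
      field_simp <;> ring
  have h33 : g3 * g3 = (-((p : ℤ) * n)) • (1 : ℍ[ℚ, -(p : ℚ), -(q : ℚ)]) + (0 : ℤ) • g2
      + (0 : ℤ) • g3 + (0 : ℤ) • g4 := by
    ext <;>
      simp only [← Int.cast_smul_eq_zsmul ℚ, hg2, hg3, hg4, hi, hj, hk] <;>
      simp [QuaternionAlgebra.re_mul, QuaternionAlgebra.imI_mul,
        QuaternionAlgebra.imJ_mul, QuaternionAlgebra.imK_mul, smul_eq_mul,
        Int.cast_mul, Int.cast_sub, Int.cast_neg, Int.cast_add, Int.cast_one, Int.cast_pow,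
        Int.cast_natCast, Int.cast_ofNat, hn', ht'] <;>
      field_simp <;> ring
  have h34 : g3 * g4 = (2 * n * t - p) • (1 : ℍ[ℚ, -(p : ℚ), -(q : ℚ)]) + (-(t + a ^ 2)) • g2
      + (-a) • g3 + (2 * a * n) • g4 := by
    ext <;>
      simp only [← Int.cast_smul_eq_zsmul ℚ, hg2, hg3, hg4, hi, hj, hk] <;>
      simp [QuaternionAlgebra.re_mul, QuaternionAlgebra.imI_mul,
        QuaternionAlgebra.imJ_mul, QuaternionAlgebra.imK_mul, smul_eq_mul,
        Int.cast_mul, Int.cast_sub, Int.cast_neg, Int.cast_add, Int.cast_one, Int.cast_pow,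
        Int.cast_natCast, Int.cast_ofNat, hn', ht'] <;>
      field_simp <;> ring
  have h43 : g4 * g3 = (-(2 * n * t)) • (1 : ℍ[ℚ, -(p : ℚ), -(q : ℚ)]) + (t + a ^ 2) • g2
      + a • g3 + (-(2 * a * n)) • g4 := by
    ext <;>
      simp only [← Int.cast_smul_eq_zsmul ℚ, hg2, hg3, hg4, hi, hj, hk] <;>
      simp [QuaternionAlgebra.re_mul, QuaternionAlgebra.imI_mul,
        QuaternionAlgebra.imJ_mul, QuaternionAlgebra.imK_mul, smul_eq_mul,
        Int.cast_mul, Int.cast_sub, Int.cast_neg, Int.cast_add, Int.cast_one, Int.cast_pow,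
        Int.cast_natCast, Int.cast_ofNat, hn', ht'] <;>
      field_simp <;> ring
  have h44 : g4 * g4 = (-t) • (1 : ℍ[ℚ, -(p : ℚ), -(q : ℚ)]) + (0 : ℤ) • g2
      + (0 : ℤ) • g3 + (0 : ℤ) • g4 := by
    ext <;>
      simp only [← Int.cast_smul_eq_zsmul ℚ, hg2, hg3, hg4, hi, hj, hk] <;>
      simp [QuaternionAlgebra.re_mul, QuaternionAlgebra.imI_mul,
        QuaternionAlgebra.imJ_mul, QuaternionAlgebra.imK_mul, smul_eq_mul,
        Int.cast_mul, Int.cast_sub, Int.cast_neg, Int.cast_add, Int.cast_one, Int.cast_pow,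
        Int.cast_natCast, Int.cast_ofNat, hn', ht'] <;>
      field_simp <;> ring
  -- closure on generators
  have key : ∀ x ∈ ({1, g2, g3, g4} : Set ℍ[ℚ, -(p : ℚ), -(q : ℚ)]),
      ∀ y ∈ ({1, g2, g3, g4} : Set ℍ[ℚ, -(p : ℚ), -(q : ℚ)]), x * y ∈ O := by
    rintro x (rfl | rfl | rfl | rfl) y hy <;>
      rcases hy with (rfl | rfl | rfl | rfl) <;>
      first
        | (rw [one_mul]; exact hgen _ (by simp))
        | (rw [mul_one]; exact hgen _ (by simp))
        | (rw [h22]; exact hmem _ _ _ _)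
        | (rw [h23]; exact hmem _ _ _ _)
        | (rw [h32]; exact hmem _ _ _ _)
        | (rw [h24]; exact hmem _ _ _ _)
        | (rw [h42]; exact hmem _ _ _ _)
        | (rw [h33]; exact hmem _ _ _ _)
        | (rw [h34]; exact hmem _ _ _ _)
        | (rw [h43]; exact hmem _ _ _ _)
        | (rw [h44]; exact hmem _ _ _ _)
  have h1 : (1 : ℍ[ℚ, -(p : ℚ), -(q : ℚ)]) ∈ O := hgen _ (by simp)
  have hmul : ∀ x ∈ O, ∀ y ∈ O, x * y ∈ O := by
    have hle : O * O ≤ O := by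
      rw [hO, Submodule.span_mul_span]
      refine Submodule.span_le.2 ?_
      rw [← hO]
      rintro z ⟨x, hx, y, hy, rfl⟩
      exact key x hx y hy
    intro x hx y hy
    exact hle (Submodule.mul_mem_mul hx hy)
  refine ⟨h1, hmul, ?_⟩
  exact ⟨{ carrier := O
           one_mem' := h1
           mul_mem' := fun hx hy => hmul _ hx _ hy
           add_mem' := fun hx hy => O.add_mem hx hy
           zero_mem' := O.zero_mem
           neg_mem' := fun hx => O.neg_mem hx }, rfl⟩
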